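/- Eigenvalue localization for the centered consensus matrix. Let 𝒲 = (w_{ij}) ∈ ℝ^{N×N} be symmetric, positive semidefinite, with nonnegative entries, positive diagonal entries, row sums equal to one (Σ_j w_{ij} = 1 for all i), and suppose the graph on {1,…,N} with edges {(i,j) : w_{ij} > 0} is connected. Then every eigenvalue of 𝒲 − (1/N)𝟙𝟙ᵀ lies in the half-open interval [0, 1); in particular all eigenvalues lie in (−1/3, 1). -/

import Mathlib

open Finset Matrix

/-- **Eigenvalue localization for the centered consensus matrix.**
Let `𝒲 ∈ ℝ^{N×N}` be symmetric, positive semidefinite, with nonnegative entries, positive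
diagonal entries, row sums equal to one, and connected positivity graph. Then every
eigenvalue of `𝒲 − (1/N)𝟙𝟙ᵀ` lies in `[0, 1)`; in particular in `(−1/3, 1)`. -/
theorem eigenvalue_localization
    (N : ℕ) (hN : 0 < N)
    (W : Matrix (Fin N) (Fin N) ℝ)
    (hWsym : W.IsSymm)
    (hWpsd : W.PosSemidef)
    (hWnn : ∀ i j, 0 ≤ W i j)
    (hWdiag : ∀ i, 0 < W i i)
    (hWrow : ∀ i, ∑ j, W i j = 1)
    (hconn : (SimpleGraph.fromRel (fun i j : Fin N => 0 < W i j)).Connected) :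
    ∀ μ ∈ spectrum ℝ (W - Matrix.of (fun _ _ : Fin N => (N : ℝ)⁻¹)),
      μ ∈ Set.Ico (0 : ℝ) 1 ∧ μ ∈ Set.Ioo (-(1 / 3) : ℝ) 1 := by
  intro μ hμ
  set M := W - Matrix.of (fun _ _ : Fin N => (N : ℝ)⁻¹) with hMdef
  -- extract an eigenvector
  have hdet : (μ • (1 : Matrix (Fin N) (Fin N) ℝ) - M).det = 0 := by
    have h := spectrum.mem_iff.mp hμ
    by_contra hd
    exact h (by
      rw [Matrix.isUnit_iff_isUnit_det]
      simpa [Algebra.algebraMap_eq_smul_one] using isUnit_iff_ne_zero.mpr hd)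
  obtain ⟨v, hv0, hker⟩ := Matrix.exists_mulVec_eq_zero_iff.mpr hdet
  have hMv : M.mulVec v = μ • v := by
    have := hker
    rw [Matrix.sub_mulVec, sub_eq_zero] at this
    rw [← this]
    ext i
    simp [Matrix.smul_mulVec]
  have hNR : (0:ℝ) < (N:ℝ) := by exact_mod_cast hN
  set s : ℝ := ∑ j, v j with hs
  have hMvi : ∀ i, ∑ j, W i j * v j - s / N = μ * v i := by
    intro i
    have h := congrFun hMv i
    simp only [Matrix.mulVec, dotProduct, hMdef, Matrix.sub_apply, Matrix.of_apply,
      Pi.smul_apply, smul_eq_mul] at h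
    rw [← h]
    calc ∑ j, W i j * v j - s / ↑N
        = ∑ x, W i x * v x - ∑ x, (↑N)⁻¹ * v x := by
          rw [← Finset.mul_sum, ← hs]; ring_nf
      _ = ∑ x, (W i x - (↑N)⁻¹) * v x := by
          rw [← Finset.sum_sub_distrib]
          exact Finset.sum_congr rfl fun x _ => by ring
  have hcol : ∀ j, ∑ i, W i j = 1 := by
    intro j
    calc ∑ i, W i j = ∑ i, W j i :=
          Finset.sum_congr rfl fun i _ => hWsym.apply j i
      _ = 1 := hWrow j
  -- μ * s = 0
  have hμs : μ * s = 0 := by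
    have hsum : ∑ i, (∑ j, W i j * v j - s / N) = ∑ i, μ * v i :=
      Finset.sum_congr rfl fun i _ => hMvi i
    have hL : ∑ i, (∑ j, W i j * v j - s / N) = 0 := by
      rw [Finset.sum_sub_distrib, Finset.sum_comm]
      have h1 : ∑ j, ∑ i : Fin N, W i j * v j = s := by
        rw [hs]
        refine Finset.sum_congr rfl fun j _ => ?_
        rw [← Finset.sum_mul, hcol j, one_mul]
      have h2 : ∑ _i : Fin N, s / (N:ℝ) = s := by
        rw [Finset.sum_const, Finset.card_univ, Fintype.card_fin, nsmul_eq_mul]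
        field_simp
      rw [h1, h2, sub_self]
    rw [hsum, ← Finset.mul_sum, ← hs] at hL
    exact hL
  have main : 0 ≤ μ ∧ μ < 1 := by
    rcases eq_or_ne μ 0 with hμ0 | hμ0
    · exact ⟨le_of_eq hμ0.symm, by rw [hμ0]; norm_num⟩
    · have hs0 : s = 0 := by
        rcases mul_eq_zero.mp hμs with h | h
        · exact absurd h hμ0
        · exact h
      have hWv : ∀ i, ∑ j, W i j * v j = μ * v i := by
        intro i
        have h := hMvi i
        rw [hs0] at h
        simpa using h
      -- positivity of ‖v‖²
      have hkne : ∃ k, v k ≠ 0 := by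
        by_contra h
        push_neg at h
        exact hv0 (funext h)
      obtain ⟨k, hk⟩ := hkne
      have hvv : 0 < ∑ j, v j * v j :=
        Finset.sum_pos' (fun j _ => mul_self_nonneg (v j))
          ⟨k, Finset.mem_univ k, mul_self_pos.mpr hk⟩
      -- μ ≥ 0 from PSD of W
      have hpsd : 0 ≤ ∑ i, v i * ∑ j, W i j * v j := by
        have h := hWpsd.dotProduct_mulVec_nonneg v
        simpa [dotProduct, Matrix.mulVec] using h
      have hμnn : 0 ≤ μ := by
        have heq : ∑ i, v i * ∑ j, W i j * v j = μ * ∑ j, v j * v j := by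
          rw [Finset.mul_sum]
          refine Finset.sum_congr rfl fun i _ => ?_
          rw [hWv i]; ring
        rw [heq] at hpsd
        exact nonneg_of_mul_nonneg_left hpsd hvv
      refine ⟨hμnn, ?_⟩
      by_contra hlt
      push_neg at hlt
      -- take the maximizing index
      haveI : Nonempty (Fin N) := Fin.pos_iff_nonempty.mp hN
      obtain ⟨i₀, -, hmax⟩ := Finset.exists_max_image Finset.univ v Finset.univ_nonempty
      set m : ℝ := v i₀ with hm
      have hmax' : ∀ j, v j ≤ m := fun j => hmax j (Finset.mem_univ j)
      have hm0 : 0 < m := by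
        by_contra hmle
        push_neg at hmle
        have hall0 : ∀ j ∈ Finset.univ, v j = 0 :=
          (Finset.sum_eq_zero_iff_of_nonpos
            (fun j _ => le_trans (hmax' j) hmle)).mp (hs ▸ hs0)
        exact hv0 (funext fun j => hall0 j (Finset.mem_univ j))
      -- μ = 1
      have hμ1 : μ = 1 := by
        have hWm : ∑ j, W i₀ j * v j ≤ m := by
          calc ∑ j, W i₀ j * v j ≤ ∑ j, W i₀ j * m :=
                Finset.sum_le_sum fun j _ =>
                  mul_le_mul_of_nonneg_left (hmax' j) (hWnn i₀ j)
            _ = m := by rw [← Finset.sum_mul, hWrow i₀, one_mul]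
        have hμm : μ * m ≤ m := by rw [← hWv i₀]; exact hWm
        have : μ ≤ 1 := by
          by_contra hgt
          push_neg at hgt
          nlinarith
        linarith
      -- propagation: v is constant = m
      have key : ∀ a, v a = m → ∀ b, 0 < W a b → v b = m := by
        intro a ha b hb
        have hsum0 : ∑ j, W a j * (m - v j) = 0 := by
          have : ∑ j, W a j * (m - v j)
              = (∑ j, W a j) * m - ∑ j, W a j * v j := by
            rw [Finset.sum_mul, ← Finset.sum_sub_distrib]
            exact Finset.sum_congr rfl fun j _ => by ring
          rw [this, hWrow a, hWv a, hμ1, one_mul, one_mul, ha, sub_self]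
        have hterm := (Finset.sum_eq_zero_iff_of_nonneg
          (fun j _ => mul_nonneg (hWnn a j) (by linarith [hmax' j]))).mp hsum0
          b (Finset.mem_univ b)
        have := mul_eq_zero.mp hterm
        rcases this with h | h
        · exact absurd h (ne_of_gt hb)
        · linarith
      set G := SimpleGraph.fromRel (fun i j : Fin N => 0 < W i j) with hG
      have step : ∀ a b, G.Adj a b → v a = m → v b = m := by
        intro a b hab ha
        rw [hG, SimpleGraph.fromRel_adj] at hab
        rcases hab.2 with h | h
        · exact key a ha b h
        · exact key a ha b (by rw [← hWsym.apply a b]; exact h)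
      have hall : ∀ a b : Fin N, G.Walk a b → v a = m → v b = m := by
        intro a b p
        induction p with
        | nil => exact id
        | cons h q ih => intro hu; exact ih (step _ _ h hu)
      have hconst : ∀ b, v b = m := by
        intro b
        obtain ⟨p⟩ := hconn.preconnected i₀ b
        exact hall _ _ p rfl
      have : s = N * m := by
        rw [hs]
        rw [Finset.sum_congr rfl fun j _ => hconst j]
        simp [Finset.card_univ]
      rw [hs0] at this
      nlinarith
  exact ⟨⟨main.1, main.2⟩, ⟨by linarith [main.1], main.2⟩⟩
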